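/- arXiv:2010.02779 — 2 statements merged into one kernel-verified Lean document; each statement's English description precedes it below -/
import Mathlib

section
/- Corollary of the Total-Distance Bound: let m = max{m_1,...,m_t} and let C ⊆ Π be a code with |C| > q^m and minimum sum-rank distance d. Then t ≤ (N − d)·q^m·(|C| − 1)/(|C| − q^m). -/
open Matrix Finset

/-- The sum-rank of a tuple of matrices. -/
noncomputable def srk {Fq : Type*} [Field Fq] {t : ℕ} {n m : Fin t → ℕ}
    (X : ∀ i, Matrix (Fin (n i)) (Fin (m i)) Fq) : ℕ :=
  ∑ i, (X i).rank

open Classical in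
lemma rank_le_card_nonzero_rows {F : Type*} [Field F] {k l : ℕ}
    (A : Matrix (Fin k) (Fin l) F) :
    A.rank ≤ (Finset.univ.filter (fun r => A r ≠ 0)).card := by
  classical
  rw [Matrix.rank_eq_finrank_span_row]
  set s : Finset (Fin l → F) :=
    (Finset.univ.filter (fun r => A r ≠ 0)).image (fun r => A r) with hs
  have hsub : Submodule.span F (Set.range A) ≤ Submodule.span F (s : Set (Fin l → F)) := by
    rw [Submodule.span_le]
    rintro x ⟨r, rfl⟩
    by_cases h : A r = 0
    · simp [h]
    · exact Submodule.subset_span (by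
        simp only [hs, Finset.coe_image, Set.mem_image, Finset.mem_coe, Finset.mem_filter]
        exact ⟨r, ⟨Finset.mem_univ r, h⟩, rfl⟩)
  calc Module.finrank F (Submodule.span F (Set.range A))
      ≤ Module.finrank F (Submodule.span F (s : Set (Fin l → F))) :=
        Submodule.finrank_mono hsub
    _ ≤ s.card := finrank_span_finset_le_card s
    _ ≤ _ := Finset.card_image_le

/-- if `m = max_i m_i`, `C ⊆ Π` has `|C| > q^m` and minimum sum-rank
distance `d`, then `t ≤ (N - d) q^m (|C| - 1)/(|C| - q^m)`. -/
theorem length_bound (Fq : Type) [Field Fq] [Fintype Fq]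
    (t : ℕ) (n m : Fin t → ℕ) (hnm : ∀ i, 1 ≤ n i ∧ n i ≤ m i)
    (C : Finset (∀ i, Matrix (Fin (n i)) (Fin (m i)) Fq))
    (hbig : (Fintype.card Fq) ^ (Finset.univ.sup m) < C.card)
    (d : ℕ)
    (hd : IsLeast {e | ∃ X ∈ C, ∃ Y ∈ C, X ≠ Y ∧ srk (X - Y) = e} d) :
    (t : ℚ) ≤ ((∑ i, (n i : ℚ)) - (d : ℚ)) *
        (Fintype.card Fq : ℚ) ^ (Finset.univ.sup m) *
        ((C.card : ℚ) - 1) /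
        ((C.card : ℚ) - (Fintype.card Fq : ℚ) ^ (Finset.univ.sup m)) := by
  classical
  set Q : ℚ := (Fintype.card Fq : ℚ) ^ (Finset.univ.sup m) with hQdef
  set c : ℚ := (C.card : ℚ) with hcdef
  have hq1 : (1 : ℚ) ≤ (Fintype.card Fq : ℚ) := by
    exact_mod_cast Fintype.card_pos
  have hQ1 : (1 : ℚ) ≤ Q := one_le_pow₀ hq1
  have hQc : Q < c := by
    rw [hQdef, hcdef]
    exact_mod_cast hbig
  have hc0 : (0 : ℚ) < c := by linarith
  -- lower bound on the double sum of sum-rank distances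
  have hlow : (d : ℚ) * (c ^ 2 - c) ≤ ∑ X ∈ C, ∑ Y ∈ C, (srk (X - Y) : ℚ) := by
    have key : ∀ X ∈ C, (c - 1) * (d : ℚ) ≤ ∑ Y ∈ C, (srk (X - Y) : ℚ) := by
      intro X hX
      have h1 : ∀ Y ∈ C, (if X = Y then (0:ℚ) else (d:ℚ)) ≤ (srk (X - Y) : ℚ) := by
        intro Y hY
        by_cases h : X = Y
        · simp [h]
        · simp only [if_neg h]
          exact_mod_cast hd.2 ⟨X, hX, Y, hY, h, rfl⟩
      have h2 : ∑ Y ∈ C, (if X = Y then (0:ℚ) else (d:ℚ)) = (c - 1) * d := by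
        have he : ∀ Y ∈ C, (if X = Y then (0:ℚ) else (d:ℚ))
            = (d : ℚ) - (if X = Y then (d:ℚ) else 0) := by
          intro Y _; by_cases h : X = Y <;> simp [h]
        rw [Finset.sum_congr rfl he, Finset.sum_sub_distrib, Finset.sum_const,
          Finset.sum_ite_eq C X (fun _ => (d:ℚ)), if_pos hX, nsmul_eq_mul]
        rw [hcdef]; ring
      rw [← h2]
      exact Finset.sum_le_sum h1
    calc (d : ℚ) * (c ^ 2 - c) = ∑ _X ∈ C, (c - 1) * (d : ℚ) := by
          rw [Finset.sum_const, nsmul_eq_mul, hcdef]; ring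
      _ ≤ _ := Finset.sum_le_sum key
  -- upper bound per block
  have hup : ∀ i, Q * (∑ X ∈ C, ∑ Y ∈ C, ((X i - Y i).rank : ℚ))
      ≤ Q * ((n i : ℚ) * (c ^ 2 - c) + c) - c ^ 2 := by
    intro i
    have hn1 : 0 < n i := (hnm i).1
    set r0 : Fin (n i) := ⟨0, hn1⟩ with hr0
    set R : Fin (n i) → ℚ :=
      fun r => ∑ X ∈ C, ∑ Y ∈ C, (if X i r = Y i r then (1:ℚ) else 0) with hR
    have hRle : ∀ r, c ≤ R r := by
      intro r
      calc c = ∑ _X ∈ C, (1:ℚ) := by rw [Finset.sum_const, nsmul_eq_mul, hcdef]; ring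
        _ ≤ R r := by
            apply Finset.sum_le_sum
            intro X hX
            have := Finset.single_le_sum
              (f := fun Y => if X i r = Y i r then (1:ℚ) else 0)
              (fun Y _ => by split <;> norm_num) hX
            simpa using this
    -- Cauchy-Schwarz on row r0
    have hR0 : c ^ 2 ≤ Q * R r0 := by
      set f : (Fin (m i) → Fq) → ℚ :=
        fun v => ((C.filter (fun X => X i r0 = v)).card : ℚ) with hf
      have hsumf : ∑ v, f v = c := by
        have h := Finset.sum_fiberwise C (fun X => X i r0) (fun _ => (1:ℚ))
        simp only [Finset.sum_const, nsmul_eq_mul, mul_one] at h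
        simpa [hf, hcdef] using h
      have hinner : ∀ X ∈ C,
          (∑ Y ∈ C, (if X i r0 = Y i r0 then (1:ℚ) else 0)) = f (X i r0) := by
        intro X _
        rw [Finset.sum_boole, hf]
        congr 1
        exact congrArg _ (Finset.filter_congr (fun Y _ => by rw [eq_comm]))
      have hRr0 : R r0 = ∑ v, f v ^ 2 := by
        simp only [hR]
        rw [Finset.sum_congr rfl hinner]
        rw [← Finset.sum_fiberwise' C (fun X => X i r0) f]
        apply Finset.sum_congr rfl
        intro v _
        rw [Finset.sum_const, nsmul_eq_mul, hf, sq]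
      have hcs := Finset.sum_mul_sq_le_sq_mul_sq Finset.univ (fun _ => (1:ℚ)) f
      simp only [one_mul, one_pow, Finset.sum_const, Finset.card_univ, nsmul_eq_mul,
        mul_one] at hcs
      have hcard : ((Fintype.card (Fin (m i) → Fq) : ℚ)) ≤ Q := by
        rw [hQdef]
        have he : Fintype.card (Fin (m i) → Fq) = (Fintype.card Fq) ^ (m i) := by
          simp [Fintype.card_fun]
        rw [he]
        push_cast
        exact pow_le_pow_right₀ hq1 (Finset.le_sup (Finset.mem_univ i))
      have hsq : (0:ℚ) ≤ ∑ v, f v ^ 2 :=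
        Finset.sum_nonneg fun v _ => sq_nonneg _
      calc c ^ 2 = (∑ v, f v) ^ 2 := by rw [hsumf]
        _ ≤ (Fintype.card (Fin (m i) → Fq) : ℚ) * ∑ v, f v ^ 2 := hcs
        _ ≤ Q * ∑ v, f v ^ 2 := mul_le_mul_of_nonneg_right hcard hsq
        _ = Q * R r0 := by rw [hRr0]
    -- rank bounded by number of differing rows
    have hrank : ∀ X ∈ C, ∀ Y ∈ C, ((X i - Y i).rank : ℚ)
        ≤ ∑ r, (1 - if X i r = Y i r then (1:ℚ) else 0) := by
      intro X _ Y _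
      have h1 := rank_le_card_nonzero_rows (X i - Y i)
      have h2 : (Finset.univ.filter (fun r => (X i - Y i) r ≠ 0))
          = (Finset.univ.filter (fun r => ¬ (X i r = Y i r))) := by
        apply Finset.filter_congr
        intro r _
        rw [show (X i - Y i) r = X i r - Y i r from rfl]
        exact sub_ne_zero
      rw [h2] at h1
      calc ((X i - Y i).rank : ℚ)
          ≤ ((Finset.univ.filter (fun r => ¬ (X i r = Y i r))).card : ℚ) := by
            exact_mod_cast h1
        _ = ∑ r, (1 - if X i r = Y i r then (1:ℚ) else 0) := by
            rw [Finset.card_filter]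
            push_cast
            apply Finset.sum_congr rfl
            intro r _
            by_cases h : X i r = Y i r <;> simp [h]
    have hblock : ∑ X ∈ C, ∑ Y ∈ C, ((X i - Y i).rank : ℚ)
        ≤ ∑ r, (c ^ 2 - R r) := by
      calc ∑ X ∈ C, ∑ Y ∈ C, ((X i - Y i).rank : ℚ)
          ≤ ∑ X ∈ C, ∑ Y ∈ C, ∑ r, (1 - if X i r = Y i r then (1:ℚ) else 0) :=
            Finset.sum_le_sum (fun X hX => Finset.sum_le_sum (fun Y hY => hrank X hX Y hY))
        _ = ∑ r, ∑ X ∈ C, ∑ Y ∈ C, (1 - if X i r = Y i r then (1:ℚ) else 0) := by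
            rw [Finset.sum_congr rfl (fun X _ => Finset.sum_comm), Finset.sum_comm]
        _ = ∑ r, (c ^ 2 - R r) := by
            apply Finset.sum_congr rfl
            intro r _
            simp only [Finset.sum_sub_distrib, Finset.sum_const, nsmul_eq_mul, mul_one, hR]
            rw [hcdef]; ring
    have hsplit : ∑ r, (c ^ 2 - R r) ≤ (c ^ 2 - R r0) + ((n i : ℚ) - 1) * (c ^ 2 - c) := by
      rw [← Finset.add_sum_erase _ _ (Finset.mem_univ r0)]
      apply add_le_add le_rfl
      have hcard : (((Finset.univ.erase r0).card : ℚ)) = (n i : ℚ) - 1 := by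
        rw [Finset.card_erase_of_mem (Finset.mem_univ r0), Finset.card_univ, Fintype.card_fin]
        rw [Nat.cast_sub hn1]
        norm_num
      calc ∑ r ∈ Finset.univ.erase r0, (c ^ 2 - R r)
          ≤ (Finset.univ.erase r0).card • (c ^ 2 - c) :=
            Finset.sum_le_card_nsmul _ _ _ (fun r _ => by have := hRle r; linarith)
        _ = ((n i : ℚ) - 1) * (c ^ 2 - c) := by rw [nsmul_eq_mul, hcard]
    calc Q * (∑ X ∈ C, ∑ Y ∈ C, ((X i - Y i).rank : ℚ))
        ≤ Q * ((c ^ 2 - R r0) + ((n i : ℚ) - 1) * (c ^ 2 - c)) := by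
          apply mul_le_mul_of_nonneg_left (le_trans hblock hsplit) (by linarith)
      _ = (Q * c ^ 2 - Q * R r0) + Q * ((n i : ℚ) - 1) * (c ^ 2 - c) := by ring
      _ ≤ (Q * c ^ 2 - c ^ 2) + Q * ((n i : ℚ) - 1) * (c ^ 2 - c) := by linarith [hR0]
      _ = Q * ((n i : ℚ) * (c ^ 2 - c) + c) - c ^ 2 := by ring
  -- combine
  have hswap : ∑ X ∈ C, ∑ Y ∈ C, (srk (X - Y) : ℚ)
      = ∑ i, ∑ X ∈ C, ∑ Y ∈ C, ((X i - Y i).rank : ℚ) := by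
    have h1 : ∀ X Y : (∀ i, Matrix (Fin (n i)) (Fin (m i)) Fq),
        (srk (X - Y) : ℚ) = ∑ i, ((X i - Y i).rank : ℚ) := by
      intro X Y
      unfold srk
      push_cast
      exact Finset.sum_congr rfl (fun i _ => by rw [Pi.sub_apply])
    simp_rw [h1]
    rw [Finset.sum_congr rfl (fun X _ => Finset.sum_comm), Finset.sum_comm]
  have hfinal : Q * ((d:ℚ) * (c ^ 2 - c))
      ≤ Q * ((∑ i, (n i : ℚ)) * (c ^ 2 - c) + t * c) - t * c ^ 2 := by
    calc Q * ((d:ℚ) * (c ^ 2 - c))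
        ≤ Q * (∑ X ∈ C, ∑ Y ∈ C, (srk (X - Y) : ℚ)) :=
          mul_le_mul_of_nonneg_left hlow (by linarith)
      _ = ∑ i, Q * (∑ X ∈ C, ∑ Y ∈ C, ((X i - Y i).rank : ℚ)) := by
          rw [hswap, Finset.mul_sum]
      _ ≤ ∑ i, (Q * ((n i : ℚ) * (c ^ 2 - c) + c) - c ^ 2) :=
          Finset.sum_le_sum (fun i _ => hup i)
      _ = Q * ((∑ i, (n i : ℚ)) * (c ^ 2 - c) + t * c) - t * c ^ 2 := by
          have e1 : ∀ i : Fin t, Q * ((n i : ℚ) * (c ^ 2 - c) + c) - c ^ 2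
              = (Q * (c ^ 2 - c)) * (n i : ℚ) + (Q * c - c ^ 2) := fun i => by ring
          simp only [e1]
          rw [Finset.sum_add_distrib, ← Finset.mul_sum, Finset.sum_const, Finset.card_univ,
            Fintype.card_fin, nsmul_eq_mul]
          ring
  rw [le_div_iff₀ (by linarith : (0:ℚ) < c - Q)]
  nlinarith [hfinal, hc0, hQ1, hQc, mul_pos hc0 hc0]
end

section
/- Suppose m_1 = ... = m_t = m and C ≤ Π is a nonzero MSRD code of minimum sum-rank distance d. For all tuples U = (U_1,...,U_t) of subspaces U_i ≤ F_q^{n_i} with total dimension u = Σ dim(U_i): |C(U)| = 1 if u < d, and |C(U)| = q^{m(u−d+1)} if u ≥ d. -/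
open Matrix Finset

/-- The column space of a matrix. -/
noncomputable def colsp {Fq : Type*} [Field Fq] {a b : ℕ}
    (X : Matrix (Fin a) (Fin b) Fq) : Submodule Fq (Fin a → Fq) :=
  LinearMap.range X.mulVecLin

/-- The shortening `C(U)` of a code on a tuple of subspaces `U`. -/
def shorten {Fq : Type*} [Field Fq] {t : ℕ} {n m : Fin t → ℕ}
    (C : Set (∀ i, Matrix (Fin (n i)) (Fin (m i)) Fq))
    (U : ∀ i, Submodule Fq (Fin (n i) → Fq)) :
    Set (∀ i, Matrix (Fin (n i)) (Fin (m i)) Fq) :=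
  {X ∈ C | ∀ i, colsp (X i) ≤ U i}

section helpers

open Module

lemma exists_pointwise_le {t : ℕ} (u : Fin t → ℕ) (s : ℕ) (hs : s ≤ ∑ i, u i) :
    ∃ w : Fin t → ℕ, (∀ i, w i ≤ u i) ∧ ∑ i, w i = s := by
  induction s with
  | zero => exact ⟨0, fun i => Nat.zero_le _, by simp⟩
  | succ s ih =>
    obtain ⟨w, hw, hsum⟩ := ih (by omega)
    have : ∃ i, w i < u i := by
      by_contra h; push_neg at h
      have := Finset.sum_le_sum (fun i (_ : i ∈ univ) => h i)
      omega
    obtain ⟨i, hi⟩ := this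
    refine ⟨Function.update w i (w i + 1), fun k => ?_, ?_⟩
    · rcases eq_or_ne k i with rfl | hk
      · simpa using hi
      · simp only [Function.update_of_ne hk]; exact hw k
    · rw [Finset.sum_update_of_mem (mem_univ i)]
      rw [Finset.sum_eq_sum_sdiff_singleton_add (mem_univ i) w] at hsum
      omega

lemma colsp_le_iff' {Fq : Type*} [Field Fq] {a b : ℕ} (A : Matrix (Fin a) (Fin b) Fq)
    (W : Submodule Fq (Fin a → Fq)) :
    colsp A ≤ W ↔ ∀ j, (fun r => A r j) ∈ W := by
  rw [colsp, Matrix.range_mulVecLin, Submodule.span_le, Set.range_subset_iff]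
  exact Iff.rfl

lemma rank_le_of_colsp_le' {Fq : Type*} [Field Fq] {a b : ℕ} (A : Matrix (Fin a) (Fin b) Fq)
    (W : Submodule Fq (Fin a → Fq)) (h : colsp A ≤ W) : A.rank ≤ finrank Fq W :=
  Submodule.finrank_mono h

lemma rank_pos_of_ne_zero' {Fq : Type*} [Field Fq] {a b : ℕ} (A : Matrix (Fin a) (Fin b) Fq)
    (h : A ≠ 0) : 0 < A.rank := by
  rcases Nat.eq_zero_or_pos A.rank with h0 | h0
  · exfalso
    apply h
    have hb : colsp A = ⊥ := Submodule.finrank_eq_zero.mp h0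
    ext r j
    have : (fun r => A r j) ∈ colsp A := (colsp_le_iff' A (colsp A)).mp le_rfl j
    rw [hb] at this
    simpa using congrFun this r
  · exact h0

lemma exists_proj_lemma {K V : Type*} [Field K] [AddCommGroup V] [Module K V]
    [FiniteDimensional K V] (W : Submodule K V) (w : ℕ) (hw : w ≤ finrank K W) :
    ∃ (π : V →ₗ[K] (Fin w → K)) (W' : Submodule K V),
      finrank K W' + w = finrank K W ∧ ∀ x ∈ W, π x = 0 → x ∈ W' := by
  classical
  let b := Module.finBasis K W
  let f : W →ₗ[K] (Fin w → K) := LinearMap.pi fun j => b.coord (Fin.castLE hw j)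
  obtain ⟨Wc, hc⟩ := Submodule.exists_isCompl W
  let p := Submodule.linearProjOfIsCompl W Wc hc
  refine ⟨f ∘ₗ p, Submodule.map W.subtype (LinearMap.ker f), ?_, ?_⟩
  · have hsurj : Function.Surjective f := by
      intro y
      refine ⟨∑ j, y j • b (Fin.castLE hw j), ?_⟩
      funext j'
      simp only [f, LinearMap.pi_apply, map_sum, _root_.map_smul, Basis.coord_apply,
        Basis.repr_self, b]
      simp [Finsupp.single_apply, Fin.castLE_inj]
    have h1 : finrank K (LinearMap.range f) + finrank K (LinearMap.ker f) = finrank K W :=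
      LinearMap.finrank_range_add_finrank_ker f
    rw [LinearMap.range_eq_top.mpr hsurj, finrank_top, Module.finrank_pi,
      Fintype.card_fin] at h1
    rw [Submodule.finrank_map_subtype_eq]
    omega
  · intro x hx hpx
    have hp : p x = ⟨x, hx⟩ := Submodule.linearProjOfIsCompl_apply_left hc ⟨x, hx⟩
    refine ⟨⟨x, hx⟩, ?_, rfl⟩
    show f ⟨x, hx⟩ = 0
    rw [← hp]
    exact hpx

/-- The linear map extracting column `j` of block `i`. -/
def colLM (Fq : Type*) [Field Fq] {t : ℕ} (n : Fin t → ℕ) (m : ℕ) (i : Fin t) (j : Fin m) :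
    (∀ k, Matrix (Fin (n k)) (Fin m) Fq) →ₗ[Fq] (Fin (n i) → Fq) where
  toFun X := fun r => X i r j
  map_add' _ _ := rfl
  map_smul' _ _ := rfl

end helpers

set_option synthInstance.maxHeartbeats 1000000 in
set_option maxHeartbeats 2000000 in
/-- for a nonzero MSRD code `C` (all blocks with `m` columns) of minimum
sum-rank distance `d` and any tuple `U` with total dimension `u`: `|C(U)| = 1` if
`u < d`, and `|C(U)| = q^{m(u - d + 1)}` if `u ≥ d`. -/
theorem MSRD_shortening_card (Fq : Type) [Field Fq] [Fintype Fq]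
    (t : ℕ) (n : Fin t → ℕ) (m : ℕ) (hnm : ∀ i, 1 ≤ n i ∧ n i ≤ m)
    (C : Submodule Fq (∀ i, Matrix (Fin (n i)) (Fin ((fun _ => m) i)) Fq))
    (hC : C ≠ ⊥) (d : ℕ)
    (hd : IsLeast {r | ∃ X ∈ C, X ≠ 0 ∧ srk X = r} d)
    (hMSRD : Nat.card ↥(C : Set (∀ i, Matrix (Fin (n i)) (Fin ((fun _ => m) i)) Fq))
      = (Fintype.card Fq) ^ (m * ((∑ i, n i) - d + 1)))
    (U : ∀ i, Submodule Fq (Fin (n i) → Fq)) :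
    ((∑ i, Module.finrank Fq (U i)) < d →
      Nat.card ↥(shorten
        (C : Set (∀ i, Matrix (Fin (n i)) (Fin ((fun _ => m) i)) Fq)) U) = 1) ∧
    (d ≤ ∑ i, Module.finrank Fq (U i) →
      Nat.card ↥(shorten
          (C : Set (∀ i, Matrix (Fin (n i)) (Fin ((fun _ => m) i)) Fq)) U)
        = (Fintype.card Fq) ^ (m * ((∑ i, Module.finrank Fq (U i)) - d + 1))) := by
  classical
  open Module in
  set q := Fintype.card Fq with hqdef
  set N := ∑ i, n i with hNdef
  set u := ∑ i, Module.finrank Fq (U i) with hudef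
  have hq : 1 < q := Fintype.one_lt_card
  -- the ambient space
  set Amb := ∀ i, Matrix (Fin (n i)) (Fin m) Fq with hAmbdef
  -- basic facts about d
  obtain ⟨⟨X₀, hX₀C, hX₀ne, hX₀srk⟩, hdlb⟩ := hd
  have hd1 : 1 ≤ d := by
    rw [← hX₀srk, srk]
    have : ∃ i, X₀ i ≠ 0 := by
      by_contra h; push_neg at h
      exact hX₀ne (funext fun i => h i)
    obtain ⟨i, hi⟩ := this
    exact Finset.sum_pos' (fun _ _ => Nat.zero_le _)
      ⟨i, mem_univ i, rank_pos_of_ne_zero' _ hi⟩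
  have hdN : d ≤ N := by
    rw [← hX₀srk, srk, hNdef]
    exact Finset.sum_le_sum fun i _ => (X₀ i).rank_le_height
  have hUn : ∀ i, Module.finrank Fq (U i) ≤ n i := by
    intro i
    have := Submodule.finrank_le (U i)
    rwa [Module.finrank_pi, Fintype.card_fin] at this
  have huN : u ≤ N := by
    rw [hudef, hNdef]
    exact Finset.sum_le_sum fun i _ => hUn i
  -- finrank of C
  haveI : Fintype ↥(C : Set Amb) := Fintype.ofFinite _
  have hfinC : Module.finrank Fq ↥C = m * (N - d + 1) := by
    have h1 : Fintype.card ↥C = q ^ Module.finrank Fq ↥C := card_eq_pow_finrank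
    have h2 : Nat.card ↥(C : Set Amb) = Fintype.card ↥C := Nat.card_eq_fintype_card
    rw [h2, h1] at hMSRD
    exact Nat.pow_right_injective hq hMSRD
  -- the quotient map φ and its kernel
  set φ : Amb →ₗ[Fq] (∀ i, Fin m → ((Fin (n i) → Fq) ⧸ U i)) :=
    LinearMap.pi (fun i => LinearMap.pi (fun j => (U i).mkQ ∘ₗ colLM Fq n m i j)) with hφdef
  have hφker : ∀ X : Amb, φ X = 0 ↔ ∀ i, colsp (X i) ≤ U i := by
    intro X
    constructor
    · intro h i
      rw [colsp_le_iff']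
      intro j
      have h2 : (U i).mkQ (fun r => X i r j) = 0 := congrFun (congrFun h i) j
      rwa [Submodule.mkQ_apply, Submodule.Quotient.mk_eq_zero] at h2
    · intro h
      funext i j
      show (U i).mkQ (fun r => X i r j) = 0
      rw [Submodule.mkQ_apply, Submodule.Quotient.mk_eq_zero]
      exact (colsp_le_iff' _ _).mp (h i) j
  set ψ := φ.domRestrict C with hψdef
  set D := LinearMap.ker ψ with hDdef
  -- the shortening is in bijection with D
  have hcard : Nat.card ↥(shorten (C : Set Amb) U) = Nat.card ↥D := by
    refine Nat.card_congr ⟨fun x => ⟨⟨x.1, x.2.1⟩, ?_⟩, fun y => ⟨y.1.1, y.1.2, ?_⟩,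
      fun x => rfl, fun y => rfl⟩
    · have := x.2.2
      simpa [hDdef, LinearMap.mem_ker, hψdef, LinearMap.domRestrict_apply, hφker] using this
    · have := y.2
      simp only [hDdef, LinearMap.mem_ker, hψdef, LinearMap.domRestrict_apply] at this
      exact (hφker _).mp this
  haveI : Fintype ↥D := Fintype.ofFinite _
  have hcardD : Nat.card ↥D = q ^ Module.finrank Fq ↥D := by
    rw [Nat.card_eq_fintype_card (α := ↥D)]; exact Module.card_eq_pow_finrank (K := Fq) (V := ↥D)
  -- srk of elements of D is at most u
  have hsrk_le : ∀ x : ↥C, x ∈ D → srk (x : Amb) ≤ u := by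
    intro x hx
    have hcols : ∀ i, colsp ((x : Amb) i) ≤ U i := by
      rw [hDdef, LinearMap.mem_ker, hψdef, LinearMap.domRestrict_apply] at hx
      exact (hφker _).mp hx
    rw [srk, hudef]
    exact Finset.sum_le_sum fun i _ => rank_le_of_colsp_le' _ _ (hcols i)
  have hsrk_ge : ∀ x : ↥C, (x : Amb) ≠ 0 → d ≤ srk (x : Amb) :=
    fun x hx => hdlb ⟨x, x.2, hx, rfl⟩
  constructor
  · -- case u < d
    intro hud
    have hD : D = ⊥ := by
      rw [eq_bot_iff]
      intro x hx
      simp only [Submodule.mem_bot]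
      by_contra hne
      have hne' : (x : Amb) ≠ 0 := by
        intro h
        exact hne (Subtype.ext h)
      have := hsrk_ge x hne'
      have := hsrk_le x hx
      omega
    rw [hcard, hcardD, hD]
    simp
  · -- case d ≤ u
    intro hdu
    rw [hcard, hcardD]
    congr 1
    -- lower bound for finrank D
    have hfinT : Module.finrank Fq (∀ i, Fin m → ((Fin (n i) → Fq) ⧸ U i)) ≤ m * (N - u) := by
      rw [Module.finrank_pi_fintype Fq]
      have : ∀ i, Module.finrank Fq (Fin m → ((Fin (n i) → Fq) ⧸ U i))
          = m * (n i - Module.finrank Fq (U i)) := by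
        intro i
        have hq2 := Submodule.finrank_quotient_add_finrank (U i)
        rw [Module.finrank_pi, Fintype.card_fin] at hq2
        rw [Module.finrank_pi_fintype Fq]
        simp only [Finset.sum_const, Finset.card_univ, Fintype.card_fin, smul_eq_mul]
        rw [show Module.finrank Fq ((Fin (n i) → Fq) ⧸ U i)
          = n i - Module.finrank Fq (U i) from by omega]
      rw [Finset.sum_congr rfl fun i _ => this i]
      rw [← Finset.mul_sum]
      refine Nat.mul_le_mul_left _ ?_
      have hsum2 : ∑ i, (n i - Module.finrank Fq (U i)) + ∑ i, Module.finrank Fq (U i)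
          = ∑ i, n i := by
        rw [← Finset.sum_add_distrib]
        refine Finset.sum_congr rfl fun i _ => ?_
        have := hUn i
        omega
      rw [hNdef, hudef]
      omega
    have hlow : m * (u - d + 1) ≤ Module.finrank Fq ↥D := by
      have h1 : Module.finrank Fq (LinearMap.range ψ) + Module.finrank Fq ↥D
          = Module.finrank Fq ↥C := LinearMap.finrank_range_add_finrank_ker ψ
      have h2 : Module.finrank Fq (LinearMap.range ψ)
          ≤ Module.finrank Fq (∀ i, Fin m → ((Fin (n i) → Fq) ⧸ U i)) :=
        Submodule.finrank_le _
      have h3 : N - d + 1 = (N - u) + (u - d + 1) := by omega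
      rw [hfinC, h3, Nat.mul_add] at h1
      omega
    -- upper bound for finrank D
    obtain ⟨w, hwle, hwsum⟩ := exists_pointwise_le (fun i => Module.finrank Fq (U i))
      (u - d + 1) (by rw [← hudef]; omega)
    choose π W' hrank hker using fun i => exists_proj_lemma (U i) (w i) (hwle i)
    set θ : Amb →ₗ[Fq] (∀ i, Fin m → (Fin (w i) → Fq)) :=
      LinearMap.pi (fun i => LinearMap.pi (fun j => π i ∘ₗ colLM Fq n m i j)) with hθdef
    set θ' : ↥D →ₗ[Fq] (∀ i, Fin m → (Fin (w i) → Fq)) :=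
      (θ ∘ₗ C.subtype) ∘ₗ D.subtype with hθ'def
    have hinj : Function.Injective θ' := by
      rw [injective_iff_map_eq_zero]
      intro x hx
      by_contra hne
      have hXne : ((x : ↥C) : Amb) ≠ 0 := by
        intro h
        exact hne (Subtype.ext (Subtype.ext h))
      have hcols : ∀ i, colsp (((x : ↥C) : Amb) i) ≤ U i := by
        have h2 : φ (((x : ↥C) : Amb)) = 0 := x.2
        exact (hφker _).mp h2
      -- columns are killed by π i
      have hcolskilled : ∀ i, colsp (((x : ↥C) : Amb) i) ≤ W' i := by
        intro i
        rw [colsp_le_iff']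
        intro j
        refine hker i _ ((colsp_le_iff' _ _).mp (hcols i) j) ?_
        have := congrFun (congrFun hx i) j
        exact this
      have hranks : ∀ i, (((x : ↥C) : Amb) i).rank + w i ≤ Module.finrank Fq (U i) := by
        intro i
        have := rank_le_of_colsp_le' _ _ (hcolskilled i)
        have := hrank i
        omega
      have hsum : srk ((x : ↥C) : Amb) + ∑ i, w i ≤ u := by
        rw [srk, hudef, ← Finset.sum_add_distrib]
        exact Finset.sum_le_sum fun i _ => hranks i
      have := hsrk_ge (x : ↥C) hXne
      omega
    have hup : Module.finrank Fq ↥D ≤ m * (u - d + 1) := by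
      have := LinearMap.finrank_le_finrank_of_injective hinj
      have htgt : Module.finrank Fq (∀ i, Fin m → (Fin (w i) → Fq)) = m * (u - d + 1) := by
        rw [Module.finrank_pi_fintype Fq]
        have : ∀ i, Module.finrank Fq (Fin m → (Fin (w i) → Fq)) = m * w i := by
          intro i
          rw [Module.finrank_pi_fintype Fq]
          simp only [Finset.sum_const, Finset.card_univ, Fintype.card_fin, smul_eq_mul,
            Module.finrank_pi]
        rw [Finset.sum_congr rfl fun i _ => this i, ← Finset.mul_sum, hwsum]
      rwa [htgt] at this
    omega
end
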